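/- For every k > 0 (with f, v, B, η fixed), the map k ↦ V_B(f, k) is differentiable at k and its derivative equals −η·B·Φ(η·d_2(f, k)). -/

import Mathlib

/-- Standard normal density `φ`. -/
noncomputable def nPDF (x : ℝ) : ℝ := (Real.sqrt (2 * Real.pi))⁻¹ * Real.exp (-(x ^ 2) / 2)

/-- Standard normal cumulative distribution function `Φ`. -/
noncomputable def nCDF (x : ℝ) : ℝ := ∫ t in Set.Iic x, nPDF t

/-- `d_1(f, k) = ln(f/k)/v + v/2`. -/
noncomputable def dOne (v f k : ℝ) : ℝ := Real.log (f / k) / v + v / 2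

/-- `d_2(f, k) = d_1(f, k) − v`. -/
noncomputable def dTwo (v f k : ℝ) : ℝ := dOne v f k - v

/-- Black formula `V_B(f, k) = η·B·(f·Φ(η·d_1(f,k)) − k·Φ(η·d_2(f,k)))`. -/
noncomputable def blackFormula (v B η f k : ℝ) : ℝ :=
  η * B * (f * nCDF (η * dOne v f k) - k * nCDF (η * dTwo v f k))

lemma nPDF_cont : Continuous nPDF := by
  unfold nPDF; fun_prop

lemma nPDF_integrable : MeasureTheory.Integrable nPDF := by
  have h : MeasureTheory.Integrable (fun x : ℝ => Real.exp (-(1/2 : ℝ) * x ^ 2)) :=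
    integrable_exp_neg_mul_sq (by norm_num)
  have : nPDF = fun x => (Real.sqrt (2 * Real.pi))⁻¹ * Real.exp (-(1/2 : ℝ) * x ^ 2) := by
    funext x; unfold nPDF; ring_nf
  rw [this]
  exact h.const_mul _

lemma hasDerivAt_nCDF (x : ℝ) : HasDerivAt nCDF (nPDF x) x := by
  have key : ∀ y : ℝ, nCDF y = nCDF 0 + ∫ t in (0:ℝ)..y, nPDF t := by
    intro y
    have := intervalIntegral.integral_Iic_sub_Iic (μ := MeasureTheory.volume)
      (nPDF_integrable.integrableOn) (nPDF_integrable.integrableOn) (a := 0) (b := y)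
    unfold nCDF
    linarith [this]
  have h := (nPDF_cont.integral_hasStrictDerivAt 0 x).hasDerivAt
  have h2 := h.const_add (nCDF 0)
  simpa [← key] using h2

lemma key_identity (f k v η : ℝ) (hf : 0 < f) (hk : 0 < k) (hv : 0 < v)
    (hη : η ^ 2 = 1) : f * nPDF (η * dOne v f k) = k * nPDF (η * dTwo v f k) := by
  have hsq : ∀ x : ℝ, (η * x) ^ 2 = x ^ 2 := by
    intro x; rw [mul_pow, hη, one_mul]
  unfold nPDF
  rw [hsq, hsq]
  set L := Real.log (f / k) with hL
  have hd : (dOne v f k) ^ 2 = (dTwo v f k) ^ 2 + 2 * L := by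
    unfold dTwo dOne
    field_simp
    ring
  have hexp : Real.exp (-L) = k / f := by
    rw [Real.exp_neg, hL, Real.exp_log (by positivity)]
    field_simp
  rw [hd]
  have : Real.exp (-(dTwo v f k ^ 2 + 2 * L) / 2)
      = Real.exp (-(dTwo v f k ^ 2) / 2) * Real.exp (-L) := by
    rw [← Real.exp_add]; ring_nf
  rw [this, hexp]
  field_simp

/-- For every `k > 0`, the map `k ↦ V_B(f, k)` is differentiable at `k`
with derivative `−η·B·Φ(η·d_2(f, k))`. -/
theorem statement15 (f k v B η : ℝ) (hf : 0 < f) (hk : 0 < k) (hv : 0 < v) (hB : 0 < B)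
    (hη : η = 1 ∨ η = -1) :
    HasDerivAt (fun x : ℝ => blackFormula v B η f x) (-η * B * nCDF (η * dTwo v f k)) k := by
  have hη2 : η ^ 2 = 1 := by rcases hη with h | h <;> simp [h]
  set c : ℝ := η * (-(1 / (k * v))) with hc
  -- derivative of log (f / x)
  have hlog : HasDerivAt (fun x : ℝ => Real.log (f / x)) (-(1 / k)) k := by
    have h1 : HasDerivAt (fun x : ℝ => Real.log f - Real.log x) (-(1 / k)) k := by
      simpa [one_div] using (Real.hasDerivAt_log hk.ne').const_sub (Real.log f)
    apply h1.congr_of_eventuallyEq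
    filter_upwards [eventually_gt_nhds hk] with x hx
    rw [Real.log_div hf.ne' hx.ne']
  have hd1 : HasDerivAt (fun x : ℝ => η * dOne v f x) c k := by
    have : HasDerivAt (fun x : ℝ => dOne v f x) (-(1 / k) / v) k := by
      unfold dOne
      exact (hlog.div_const v).add_const (v / 2)
    have h2 := this.const_mul η
    refine h2.congr_deriv ?_; symm
    rw [hc]; field_simp
  have hd2 : HasDerivAt (fun x : ℝ => η * dTwo v f x) c k := by
    have : (fun x : ℝ => η * dTwo v f x) = fun x : ℝ => η * dOne v f x - η * v := by
      funext x; unfold dTwo; ring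
    rw [this]
    exact hd1.sub_const (η * v)
  have hA : HasDerivAt (fun x : ℝ => nCDF (η * dOne v f x)) (nPDF (η * dOne v f k) * c) k :=
    by have := (hasDerivAt_nCDF (η * dOne v f k)).comp k hd1; exact this
  have hC : HasDerivAt (fun x : ℝ => nCDF (η * dTwo v f x)) (nPDF (η * dTwo v f k) * c) k :=
    by have := (hasDerivAt_nCDF (η * dTwo v f k)).comp k hd2; exact this
  have hF := (((hA.const_mul f).sub ((hasDerivAt_id k).mul hC)).const_mul (η * B))
  simp only [id_eq, one_mul] at hF
  have hkey := key_identity f k v η hf hk hv hη2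
  unfold blackFormula
  refine hF.congr_deriv ?_; symm
  rw [hc]
  field_simp
  linear_combination (η ^ 2) * hkey
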